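/- Let n ∈ ℕ and 0 ≤ α < n. There exist constants c > 0 and δ > 0, depending only on n and α, such that for every r > 0 the function f(x) = |x|^{−α} 𝟙_{|x| ≤ r} on ℝⁿ (which is integrable) satisfies Re f̂(ξ) ≥ c r^{n−α} for all ξ with |ξ| ≤ δ/r. -/

import Mathlib

open MeasureTheory Filter
open scoped ENNReal FourierTransform

open Metric Real Module
open scoped RealInnerProductSpace

lemma aux_int (n : ℕ) (hn : 0 < n) (α : ℝ) (hα0 : 0 ≤ α) (hαn : α < n) (r : ℝ) (hr : 0 < r) :
    IntegrableOn (fun x : EuclideanSpace ℝ (Fin n) => ‖x‖ ^ (-α)) (closedBall 0 r) := by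
  haveI : Nonempty (Fin n) := Fin.pos_iff_nonempty.mp hn
  set E := EuclideanSpace ℝ (Fin n) with hE
  set A : ℕ → Set E := fun k => closedBall 0 (r * 2⁻¹ ^ k) \ closedBall 0 (r * 2⁻¹ ^ (k + 1))
    with hA
  have hposk : ∀ k : ℕ, (0:ℝ) < r * 2⁻¹ ^ k := fun k => by positivity
  -- the cover
  have hcover : closedBall (0:E) r ⊆ {0} ∪ ⋃ k, A k := by
    intro x hx
    rcases eq_or_ne x 0 with h | h
    · exact Or.inl (by simp [h])
    · refine Or.inr ?_
      have hxpos : 0 < ‖x‖ := norm_pos_iff.2 h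
      have hex : ∃ k, r * 2⁻¹ ^ (k + 1) < ‖x‖ := by
        obtain ⟨k, hk⟩ := exists_pow_lt_of_lt_one (div_pos hxpos hr)
          (by norm_num : (2⁻¹:ℝ) < 1)
        refine ⟨k, ?_⟩
        have h1 : (2⁻¹:ℝ) ^ (k+1) ≤ 2⁻¹ ^ k :=
          pow_le_pow_of_le_one (by norm_num) (by norm_num) (Nat.le_succ k)
        calc r * 2⁻¹ ^ (k+1) ≤ r * 2⁻¹ ^ k := by nlinarith
          _ < r * (‖x‖ / r) := by nlinarith
          _ = ‖x‖ := by field_simp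
      have h1 : r * 2⁻¹ ^ (Nat.find hex + 1) < ‖x‖ := Nat.find_spec hex
      have h2 : ‖x‖ ≤ r * 2⁻¹ ^ (Nat.find hex) := by
        rcases Nat.eq_zero_or_pos (Nat.find hex) with h0 | hpos
        · rw [h0]; simpa [dist_zero_right] using hx
        · have hmin := Nat.find_min hex (Nat.pred_lt hpos.ne')
          rw [Nat.pred_eq_sub_one, show Nat.find hex - 1 + 1 = Nat.find hex by omega] at hmin
          exact not_lt.1 hmin
      refine Set.mem_iUnion.2 ⟨Nat.find hex, ?_⟩
      simp only [hA, Set.mem_diff, mem_closedBall, dist_zero_right, not_le]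
      exact ⟨h2, h1⟩
  -- measurability
  refine ⟨(Measurable.aestronglyMeasurable (by fun_prop)), ?_⟩
  rw [hasFiniteIntegral_iff_norm]
  have hnorm : ∀ x : E, ENNReal.ofReal ‖‖x‖ ^ (-α)‖ = ENNReal.ofReal (‖x‖ ^ (-α)) := by
    intro x; rw [Real.norm_of_nonneg (rpow_nonneg (norm_nonneg _) _)]
  simp only [hnorm]
  set q : ℝ := 2 ^ α * (2⁻¹:ℝ) ^ n with hq
  have hq0 : 0 ≤ q := by positivity
  have hq1 : q < 1 := by
    have h2 : (2:ℝ) ^ α < 2 ^ (n:ℝ) := rpow_lt_rpow_of_exponent_lt one_lt_two hαn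
    rw [rpow_natCast] at h2
    rw [hq, inv_pow]
    rw [mul_inv_lt_iff₀ (by positivity), one_mul]
    exact h2
  set a : ℕ → ℝ := fun k => (r * 2⁻¹ ^ (k+1)) ^ (-α) * (r * 2⁻¹ ^ k) ^ n with ha
  have ha0 : ∀ k, 0 ≤ a k := fun k => by positivity
  have hgeom : ∀ k, a k = a 0 * q ^ k := by
    intro k
    induction k with
    | zero => simp
    | succ m ih =>
      have hb : (r * 2⁻¹ ^ (m+2)) ^ (-α) = (r * 2⁻¹ ^ (m+1)) ^ (-α) * 2 ^ α := by
        have h1 : r * 2⁻¹ ^ (m+2) = (r * 2⁻¹ ^ (m+1)) * 2⁻¹ := by ring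
        have h2 : (2⁻¹:ℝ) ^ (-α) = 2 ^ α := by
          rw [Real.inv_rpow (by norm_num : (0:ℝ) ≤ 2),
            ← Real.rpow_neg (by norm_num : (0:ℝ) ≤ 2), neg_neg]
        rw [h1, Real.mul_rpow (by positivity) (by norm_num), h2]
      have hc : (r * 2⁻¹ ^ (m+1)) ^ n = (r * 2⁻¹ ^ m) ^ n * (2⁻¹:ℝ) ^ n := by
        rw [← mul_pow]; ring_nf
      have key : a (m+1) = q * a m := by
        show (r * 2⁻¹ ^ (m+1+1)) ^ (-α) * (r * 2⁻¹ ^ (m+1)) ^ n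
          = q * ((r * 2⁻¹ ^ (m+1)) ^ (-α) * (r * 2⁻¹ ^ m) ^ n)
        rw [show m+1+1 = m+2 from rfl, hb, hc, hq]
        ring
      rw [key, ih]; ring
  -- main bound
  calc ∫⁻ x in closedBall (0:E) r, ENNReal.ofReal (‖x‖ ^ (-α))
      ≤ ∫⁻ x in ({0} ∪ ⋃ k, A k : Set E), ENNReal.ofReal (‖x‖ ^ (-α)) :=
        lintegral_mono_set hcover
    _ ≤ (∫⁻ x in ({0} : Set E), ENNReal.ofReal (‖x‖ ^ (-α)))
        + ∫⁻ x in (⋃ k, A k), ENNReal.ofReal (‖x‖ ^ (-α)) := lintegral_union_le _ _ _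
    _ ≤ 0 + ∑' k, ∫⁻ x in A k, ENNReal.ofReal (‖x‖ ^ (-α)) := by
        gcongr
        · have : volume ({0} : Set E) = 0 := by
            haveI : Nontrivial E := nontrivial_of_finrank_pos (R := ℝ)
              (by rw [finrank_euclideanSpace, Fintype.card_fin]; exact hn)
            exact measure_singleton 0
          rw [setLIntegral_measure_zero _ _ this]
        · exact lintegral_iUnion_le _ _
    _ ≤ ∑' k, ENNReal.ofReal (a k) * volume (ball (0:E) 1) := by
        rw [zero_add]
        gcongr with k
        have hbd : ∀ x ∈ A k, ENNReal.ofReal (‖x‖ ^ (-α))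
            ≤ ENNReal.ofReal ((r * 2⁻¹ ^ (k+1)) ^ (-α)) := by
          intro x hx
          simp only [hA, Set.mem_diff, mem_closedBall, dist_zero_right, not_le] at hx
          exact ENNReal.ofReal_le_ofReal
            (rpow_le_rpow_of_nonpos (hposk (k+1)) hx.2.le (neg_nonpos.2 hα0))
        calc ∫⁻ x in A k, ENNReal.ofReal (‖x‖ ^ (-α))
            ≤ ∫⁻ _ in A k, ENNReal.ofReal ((r * 2⁻¹ ^ (k+1)) ^ (-α)) :=
              setLIntegral_mono' (measurableSet_closedBall.diff measurableSet_closedBall) hbd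
          _ = ENNReal.ofReal ((r * 2⁻¹ ^ (k+1)) ^ (-α)) * volume (A k) :=
              setLIntegral_const _ _
          _ ≤ ENNReal.ofReal ((r * 2⁻¹ ^ (k+1)) ^ (-α)) *
              (ENNReal.ofReal ((r * 2⁻¹ ^ k) ^ finrank ℝ E) * volume (ball (0:E) 1)) := by
              gcongr
              calc volume (A k) ≤ volume (closedBall (0:E) (r * 2⁻¹ ^ k)) :=
                    measure_mono Set.diff_subset
                _ = ENNReal.ofReal ((r * 2⁻¹ ^ k) ^ finrank ℝ E) * volume (ball (0:E) 1) :=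
                    Measure.addHaar_closedBall _ _ (hposk k).le
          _ = ENNReal.ofReal (a k) * volume (ball (0:E) 1) := by
              rw [← mul_assoc, ← ENNReal.ofReal_mul (by positivity), ha]
              congr 3
              rw [finrank_euclideanSpace, Fintype.card_fin]
    _ < ⊤ := by
        have hsum : ∑' k, ENNReal.ofReal (a k) * volume (ball (0:E) 1)
            = ENNReal.ofReal (a 0) * (1 - ENNReal.ofReal q)⁻¹ * volume (ball (0:E) 1) := by
          rw [ENNReal.tsum_mul_right]
          congr 1
          calc ∑' k, ENNReal.ofReal (a k)
              = ∑' k, ENNReal.ofReal (a 0) * ENNReal.ofReal q ^ k := by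
                congr 1; funext k
                rw [hgeom k, ENNReal.ofReal_mul (ha0 0), ENNReal.ofReal_pow hq0]
            _ = ENNReal.ofReal (a 0) * (1 - ENNReal.ofReal q)⁻¹ := by
                rw [ENNReal.tsum_mul_left, ENNReal.tsum_geometric]
        rw [hsum]
        have h1 : (1 - ENNReal.ofReal q)⁻¹ ≠ ⊤ := by
          rw [Ne, ENNReal.inv_eq_top, tsub_eq_zero_iff_le]
          exact fun hcon => absurd (le_antisymm (ENNReal.ofReal_le_one.2 hq1.le)
            (by simpa using hcon)) (by simp [ENNReal.ofReal_eq_one, hq1.ne])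
        exact ENNReal.mul_lt_top (ENNReal.mul_lt_top ENNReal.ofReal_lt_top h1.lt_top)
          measure_ball_lt_top

open Filter
open scoped FourierTransform RealInnerProductSpace

set_option maxHeartbeats 1000000 in
theorem stmt8 (n : ℕ) (hn : 0 < n) (α : ℝ) (hα0 : 0 ≤ α) (hαn : α < n) :
    ∃ c : ℝ, 0 < c ∧ ∃ δ : ℝ, 0 < δ ∧ ∀ r : ℝ, 0 < r →
      Integrable
        (Set.indicator (Metric.closedBall (0 : EuclideanSpace ℝ (Fin n)) r)
          (fun x => ((‖x‖ ^ (-α) : ℝ) : ℂ))) ∧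
      ∀ ξ : EuclideanSpace ℝ (Fin n), ‖ξ‖ ≤ δ / r →
        c * r ^ ((n : ℝ) - α) ≤
          (𝓕 (Set.indicator (Metric.closedBall (0 : EuclideanSpace ℝ (Fin n)) r)
              (fun x => ((‖x‖ ^ (-α) : ℝ) : ℂ))) ξ).re := by
  haveI : Nonempty (Fin n) := Fin.pos_iff_nonempty.mp hn
  haveI : Nontrivial (EuclideanSpace ℝ (Fin n)) := nontrivial_of_finrank_pos (R := ℝ)
    (by rw [finrank_euclideanSpace, Fintype.card_fin]; exact hn)
  set E := EuclideanSpace ℝ (Fin n) with hE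
  set V : ℝ := (volume (ball (0:E) 1)).toReal with hV
  have hV0 : 0 < V := by
    rw [hV]
    exact ENNReal.toReal_pos (measure_ball_pos _ _ one_pos).ne' measure_ball_lt_top.ne
  refine ⟨V / 2, by positivity, 1/8, by norm_num, fun r hr => ?_⟩
  have hg : IntegrableOn (fun x : E => ‖x‖ ^ (-α)) (closedBall 0 r) :=
    aux_int n hn α hα0 hαn r hr
  have hgC : IntegrableOn (fun x : E => ((‖x‖ ^ (-α) : ℝ) : ℂ)) (closedBall 0 r) := hg.ofReal
  have hf : Integrable (Set.indicator (closedBall (0:E) r) fun x => ((‖x‖ ^ (-α) : ℝ) : ℂ)) :=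
    (integrable_indicator_iff measurableSet_closedBall).2 hgC
  refine ⟨hf, fun ξ hξ => ?_⟩
  set f : E → ℂ := Set.indicator (closedBall (0:E) r) fun x => ((‖x‖ ^ (-α) : ℝ) : ℂ)
    with hfdef
  have hcont : Continuous fun v : E => 𝐞 (-⟪v, ξ⟫) :=
    Real.continuous_fourierChar.comp ((continuous_id.inner continuous_const).neg)
  have hconv : Integrable fun v : E => 𝐞 (-⟪v, ξ⟫) • f v := by
    refine hf.norm.mono' (hcont.aestronglyMeasurable.smul hf.aestronglyMeasurable)
      (Eventually.of_forall fun v => ?_)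
    simp [norm_smul]
  have hre : (𝓕 f ξ).re = ∫ v : E, (𝐞 (-⟪v, ξ⟫) • f v).re := by
    rw [Real.fourier_eq]
    simpa using (integral_re hconv).symm
  have hpt : ∀ v : E, (𝐞 (-⟪v, ξ⟫) • f v).re
      = Set.indicator (closedBall (0:E) r)
          (fun x => Real.cos (2 * π * ⟪x, ξ⟫) * ‖x‖ ^ (-α)) v := by
    intro v
    classical
    rw [hfdef, Set.indicator_apply, Set.indicator_apply]
    split_ifs with h
    · rw [Circle.smul_def, Real.fourierChar_apply,
        show 2 * π * -(inner ℝ v ξ : ℝ) = -(2 * π * inner ℝ v ξ) by ring]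
      simp [Complex.mul_re, Complex.exp_ofReal_mul_I_re, Complex.exp_ofReal_mul_I_im,
        Real.cos_neg]
      left
      rw [show -(2 * (π:ℂ) * ((inner ℝ v ξ : ℝ) : ℂ) * Complex.I)
          = ((-(2 * π * inner ℝ v ξ) : ℝ) : ℂ) * Complex.I by push_cast; ring,
        Complex.exp_ofReal_mul_I_re, Real.cos_neg]
    · simp
  rw [hre]
  simp_rw [hpt]
  rw [integral_indicator measurableSet_closedBall]
  have hnull : volume ({(0:E)} : Set E) = 0 := measure_singleton 0
  have hsetEq : ∫ x in closedBall (0:E) r, Real.cos (2 * π * ⟪x, ξ⟫) * ‖x‖ ^ (-α)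
      = ∫ x in closedBall (0:E) r \ {0}, Real.cos (2 * π * ⟪x, ξ⟫) * ‖x‖ ^ (-α) :=
    (setIntegral_congr_set ((diff_ae_eq_self (μ := volume)).2
      (measure_mono_null Set.inter_subset_right hnull))).symm
  rw [hsetEq]
  have hs : MeasurableSet (closedBall (0:E) r \ {0}) :=
    measurableSet_closedBall.diff (measurableSet_singleton 0)
  have hμs : volume (closedBall (0:E) r \ {0}) ≠ ⊤ :=
    ((measure_mono Set.diff_subset).trans_lt measure_closedBall_lt_top).ne
  have hptlow : ∀ x ∈ closedBall (0:E) r \ {0},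
      r ^ (-α) / 2 ≤ Real.cos (2 * π * ⟪x, ξ⟫) * ‖x‖ ^ (-α) := by
    intro x hx
    obtain ⟨hxb, hx0⟩ := hx
    have hx0' : x ≠ 0 := fun hcon => hx0 (by simp [hcon])
    have hxn : 0 < ‖x‖ := norm_pos_iff.2 hx0'
    have hxle : ‖x‖ ≤ r := by simpa [dist_zero_right] using hxb
    have hA : r ^ (-α) ≤ ‖x‖ ^ (-α) :=
      rpow_le_rpow_of_nonpos hxn hxle (neg_nonpos.2 hα0)
    have ht : |⟪x, ξ⟫| ≤ 1/8 := by
      calc |⟪x, ξ⟫| ≤ ‖x‖ * ‖ξ‖ := abs_real_inner_le_norm x ξ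
        _ ≤ r * ((1/8) / r) := by
            exact mul_le_mul hxle hξ (norm_nonneg _) hr.le
        _ = 1/8 := by field_simp
    have hcos : 1/2 ≤ Real.cos (2 * π * ⟪x, ξ⟫) := by
      have hb := Real.one_sub_sq_div_two_le_cos (x := 2 * π * ⟪x, ξ⟫)
      have hpi := Real.pi_le_four
      have hpi0 := Real.pi_pos
      have habs : |2 * π * ⟪x, ξ⟫| ≤ 1 := by
        rw [abs_mul, abs_mul, abs_of_nonneg (by norm_num : (0:ℝ) ≤ 2),
          abs_of_nonneg hpi0.le]
        nlinarith [abs_nonneg (⟪x, ξ⟫)]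
      nlinarith [sq_abs (2 * π * ⟪x, ξ⟫), abs_nonneg (2 * π * ⟪x, ξ⟫)]
    have h1 : 0 ≤ ‖x‖ ^ (-α) := rpow_nonneg (norm_nonneg _) _
    have h2 : 0 < r ^ (-α) := rpow_pos_of_pos hr _
    nlinarith
  have hint2 : IntegrableOn (fun x : E => Real.cos (2 * π * ⟪x, ξ⟫) * ‖x‖ ^ (-α))
      (closedBall (0:E) r \ {0}) := by
    apply Integrable.bdd_mul (c := 1) (hg.mono_set Set.diff_subset)
    · exact (Real.continuous_cos.comp
        (continuous_const.mul (continuous_id.inner continuous_const))).aestronglyMeasurable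
    · exact Eventually.of_forall fun x => by
        rw [Real.norm_eq_abs]; exact Real.abs_cos_le_one _
  have key := setIntegral_ge_of_const_le_real hs hμs hptlow hint2
  have hμ : (volume (closedBall (0:E) r \ {0})).toReal = r ^ n * V := by
    rw [measure_diff_null hnull, Measure.addHaar_closedBall _ _ hr.le,
      finrank_euclideanSpace, Fintype.card_fin, ENNReal.toReal_mul,
      ENNReal.toReal_ofReal (by positivity), hV]
  rw [measureReal_def, hμ] at key
  have halg : V / 2 * r ^ ((n : ℝ) - α) = r ^ (-α) / 2 * (r ^ n * V) := by
    rw [Real.rpow_sub hr, Real.rpow_neg hr.le, Real.rpow_natCast]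
    field_simp
  rw [halg]
  exact key
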